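/- Let T be a tree on n vertices with matching number 2. Then ξ^{ee}(T) ≤ (5n−4)/6, with equality if and only if T is isomorphic to a double star P_2(a,b) for some integers a, b ≥ 1 with a + b = n − 2. -/

import Mathlib

open SimpleGraph

variable {V : Type*}

noncomputable def ecc (G : SimpleGraph V) (v : V) : ℕ := ⨆ u : V, G.dist v u

noncomputable def deg (G : SimpleGraph V) (v : V) : ℕ := (G.neighborSet v).ncard

noncomputable def ree {V : Type*} [Fintype V] (G : SimpleGraph V) : ℝ :=
  letI := Classical.decEq V
  letI := Classical.decRel G.Adj
  ∑ e ∈ G.edgeFinset,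
    Sym2.lift ⟨fun u v => 1 / (ecc G u : ℝ) + 1 / (ecc G v : ℝ), fun _ _ => by ring⟩ e

noncomputable def gdiam (G : SimpleGraph V) : ℕ := ⨆ v : V, ecc G v

/-- The matching number of a graph: the maximum number of pairwise disjoint edges. -/
noncomputable def matchNum {W : Type*} (G : SimpleGraph W) : ℕ :=
  sSup {m | ∃ s : Set (Sym2 W), s ⊆ G.edgeSet ∧
    (s.Pairwise fun e f => ∀ x, x ∈ e → x ∉ f) ∧ s.ncard = m}

/-- The double star `P_2(a,b)`: an edge `uv` (vertices 0 and 1) with `a` pendant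
vertices attached to `u` (vertices 2, …, a+1) and `b` pendant vertices attached
to `v` (vertices a+2, …, a+b+1). -/
def doubleStar (a b : ℕ) : SimpleGraph (Fin (a + b + 2)) :=
  SimpleGraph.fromRel (fun x y => (x.val = 0 ∧ y.val = 1) ∨
    (x.val = 0 ∧ 2 ≤ y.val ∧ y.val < a + 2) ∨ (x.val = 1 ∧ a + 2 ≤ y.val))

open Finset

set_option linter.unusedSectionVars false
set_option linter.unusedVariables false

section Helpers

variable {T : SimpleGraph V}

lemma walk_lip (f : V → ℕ) (hf : ∀ s t, T.Adj s t → f t ≤ f s + 1) :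
    ∀ {x y : V} (p : T.Walk x y), f y ≤ f x + p.length := by
  intro x y p
  induction p with
  | nil => simp
  | cons h q ih =>
      have h2 := hf _ _ h
      simp only [Walk.length_cons]
      omega

lemma dist_ge_lip (hc : T.Connected) (f : V → ℕ)
    (hf : ∀ s t, T.Adj s t → f t ≤ f s + 1) {x y : V} (hx : f x = 0) :
    f y ≤ T.dist x y := by
  obtain ⟨p, hp⟩ := (hc x y).exists_walk_length_eq_dist
  have := walk_lip f hf p
  omega

lemma path_eq' (hT : T.IsTree) {v w : V} {p q : T.Walk v w} (hp : p.IsPath) (hq : q.IsPath) :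
    p = q := by
  obtain ⟨r, _, hu⟩ := hT.existsUnique_path v w
  rw [hu p hp, hu q hq]

lemma tri (hT : T.IsTree) {x y z : V} (hxy : T.Adj x y) (hyz : T.Adj y z)
    (hxz : T.Adj x z) : False := by
  have h1 : (Walk.cons hxz Walk.nil).IsPath := by
    simp [Walk.cons_isPath_iff, hxz.ne]
  have h2 : (Walk.cons hxy (Walk.cons hyz Walk.nil)).IsPath := by
    simp [Walk.cons_isPath_iff, hyz.ne, hxy.ne, hxz.ne]
  have := congrArg Walk.length (path_eq' hT h1 h2)
  simp [Walk.length_cons] at this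

lemma c4 (hT : T.IsTree) {x y z w : V} (h1 : T.Adj x y) (h2 : T.Adj y z)
    (h3 : T.Adj z w) (h4 : T.Adj w x) (hxz : x ≠ z) (hyw : y ≠ w) : False := by
  have hp1 : (Walk.cons h1 (Walk.cons h2 Walk.nil)).IsPath := by
    simp [Walk.cons_isPath_iff, h1.ne, h2.ne, hxz]
  have hp2 : (Walk.cons h4.symm (Walk.cons h3.symm Walk.nil)).IsPath := by
    simp [Walk.cons_isPath_iff, h4.ne', h3.ne', hxz]
  have := congrArg Walk.support (path_eq' hT hp1 hp2)
  simp [Walk.support_cons] at this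
  exact hyw this

lemma c5 (hT : T.IsTree) {v1 v2 v3 v4 v5 : V} (h1 : T.Adj v1 v2) (h2 : T.Adj v2 v3)
    (h3 : T.Adj v3 v4) (h4 : T.Adj v4 v5) (h5 : T.Adj v5 v1)
    (h13 : v1 ≠ v3) (h14 : v1 ≠ v4) (h35 : v3 ≠ v5) : False := by
  have hp1 : (Walk.cons h1 (Walk.cons h2 Walk.nil)).IsPath := by
    simp [Walk.cons_isPath_iff, h1.ne, h2.ne, h13]
  have hp2 : (Walk.cons h5.symm (Walk.cons h4.symm (Walk.cons h3.symm Walk.nil))).IsPath := by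
    simp [Walk.cons_isPath_iff, h5.ne', h4.ne', h3.ne', h13, h14, h35.symm]
  have := congrArg Walk.length (path_eq' hT hp1 hp2)
  simp [Walk.length_cons] at this

lemma exists_adj_of_ne (hc : T.Connected) {x y : V} (hxy : x ≠ y) :
    ∃ z, T.Adj x z := by
  obtain ⟨p⟩ := hc x y
  cases p with
  | nil => exact absurd rfl hxy
  | cons h q => exact ⟨_, h⟩

lemma ecc_eq_of (hc : T.Connected) [Fintype V] {x : V} {k : ℕ}
    (hub : ∀ y, T.dist x y ≤ k) {y₀ : V} (hlb : k ≤ T.dist x y₀) : ecc T x = k := by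
  have : Nonempty V := ⟨x⟩
  refine le_antisymm (ciSup_le hub) ?_
  exact le_trans hlb (le_ciSup (Set.Finite.bddAbove (Set.finite_range _)) y₀)

end Helpers

lemma sum_lift_eq_sum_degree [Fintype V] [DecidableEq V] (G : SimpleGraph V)
    [DecidableRel G.Adj] (g : V → ℝ) :
    ∑ e ∈ G.edgeFinset, Sym2.lift ⟨fun u v => g u + g v, fun _ _ => by ring⟩ e
      = ∑ v, (G.degree v : ℝ) * g v := by
  have h1 : ∑ d : G.Dart, g d.fst
      = ∑ e ∈ G.edgeFinset, Sym2.lift ⟨fun u v => g u + g v, fun _ _ => by ring⟩ e := by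
    rw [← Finset.sum_fiberwise_of_maps_to (g := Dart.edge)
      (fun d _ => mem_edgeFinset.2 d.edge_mem) (fun d => g d.fst)]
    refine Finset.sum_congr rfl ?_
    intro e he
    rw [mem_edgeFinset] at he
    induction e with
    | _ x y =>
      let d : G.Dart := ⟨(x, y), he⟩
      have hfib : (univ.filter fun d' : G.Dart => d'.edge = s(x, y)) = {d, d.symm} :=
        d.edge_fiber
      rw [hfib, Finset.sum_pair d.symm_ne.symm]
      simp [Sym2.lift_mk]; rfl
  have h2 : ∑ d : G.Dart, g d.fst = ∑ v, (G.degree v : ℝ) * g v := by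
    rw [← Finset.sum_fiberwise_of_maps_to (g := fun d : G.Dart => d.fst)
      (fun d _ => mem_univ d.fst) (fun d => g d.fst)]
    refine Finset.sum_congr rfl ?_
    intro v _
    have hc : (univ.filter fun d : G.Dart => d.fst = v).card = G.degree v :=
      G.dart_fst_fiber_card_eq_degree v
    calc ∑ d ∈ univ.filter (fun d : G.Dart => d.fst = v), g d.fst
        = ∑ d ∈ univ.filter (fun d : G.Dart => d.fst = v), g v := by
          refine Finset.sum_congr rfl fun d hd => ?_
          rw [(mem_filter.1 hd).2]
      _ = (G.degree v : ℝ) * g v := by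
          rw [Finset.sum_const, ← hc]; simp [nsmul_eq_mul]
  rw [← h1, h2]

lemma ree_eq_sum [Fintype V] (G : SimpleGraph V) :
    ree G = ∑ v, ((G.neighborSet v).ncard : ℝ) * (1 / (ecc G v : ℝ)) := by
  classical
  letI := Classical.decEq V
  letI := Classical.decRel G.Adj
  have key := sum_lift_eq_sum_degree G (fun v => 1 / (ecc G v : ℝ))
  have hdeg : ∀ v : V, (G.neighborSet v).ncard = G.degree v := by
    intro v
    rw [Set.ncard_eq_toFinset_card']
    rfl
  unfold ree
  rw [key]
  refine Finset.sum_congr rfl fun v _ => ?_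
  rw [hdeg v]

section Match
variable {W : Type*} [Fintype W] {G : SimpleGraph W}

private lemma sym2_ne {a b c d : W} (h1 : a ≠ c) (h2 : a ≠ d) : s(a, b) ≠ s(c, d) := by
  intro h
  have : a ∈ s(c, d) := h ▸ Sym2.mem_mk_left a b
  rw [Sym2.mem_iff] at this
  tauto

private lemma sym2_disj {a b c d : W} (h1 : a ≠ c) (h2 : a ≠ d) (h3 : b ≠ c) (h4 : b ≠ d) :
    ∀ x, x ∈ s(a, b) → x ∉ s(c, d) := by
  intro x hx hx'
  rw [Sym2.mem_iff] at hx hx'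
  rcases hx with rfl | rfl <;> rcases hx' with rfl | rfl <;> tauto

lemma matchSet_bdd :
    BddAbove {m | ∃ s : Set (Sym2 W), s ⊆ G.edgeSet ∧
      (s.Pairwise fun e f => ∀ x, x ∈ e → x ∉ f) ∧ s.ncard = m} := by
  classical
  refine ⟨Fintype.card (Sym2 W), ?_⟩
  rintro m ⟨s, _, _, rfl⟩
  calc s.ncard ≤ (Set.univ : Set (Sym2 W)).ncard :=
        Set.ncard_le_ncard (Set.subset_univ s) Set.finite_univ
    _ = Fintype.card (Sym2 W) := by rw [Set.ncard_univ, Nat.card_eq_fintype_card]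

lemma exists_two_matching (hm : matchNum G = 2) :
    ∃ x1 y1 x2 y2, G.Adj x1 y1 ∧ G.Adj x2 y2 ∧ x1 ≠ x2 ∧ x1 ≠ y2 ∧ y1 ≠ x2 ∧ y1 ≠ y2 := by
  classical
  have hne : {m | ∃ s : Set (Sym2 W), s ⊆ G.edgeSet ∧
      (s.Pairwise fun e f => ∀ x, x ∈ e → x ∉ f) ∧ s.ncard = m}.Nonempty :=
    ⟨0, ∅, by simp, Set.pairwise_empty _, by simp⟩
  have h2 := Nat.sSup_mem hne matchSet_bdd
  rw [matchNum] at hm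
  rw [hm] at h2
  obtain ⟨s, hsub, hpw, hcard⟩ := h2
  obtain ⟨e1, e2, hne12, rfl⟩ := Set.ncard_eq_two.1 hcard
  have he1 : e1 ∈ G.edgeSet := hsub (by simp)
  have he2 : e2 ∈ G.edgeSet := hsub (by simp)
  have hd : ∀ x, x ∈ e1 → x ∉ e2 := hpw (by simp) (by simp) hne12
  induction e1 with
  | _ x1 y1 =>
  induction e2 with
  | _ x2 y2 =>
  refine ⟨x1, y1, x2, y2, he1, he2, fun h => ?_, fun h => ?_, fun h => ?_, fun h => ?_⟩
  · subst h; exact hd x1 (by simp) (by simp)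
  · subst h; exact hd x1 (by simp) (by simp)
  · subst h; exact hd y1 (by simp) (by simp)
  · subst h; exact hd y1 (by simp) (by simp)

lemma no_three_matching (hm : matchNum G = 2) {a1 b1 a2 b2 a3 b3 : W}
    (h1 : G.Adj a1 b1) (h2 : G.Adj a2 b2) (h3 : G.Adj a3 b3)
    (e12 : a1 ≠ a2) (e12' : a1 ≠ b2) (f12 : b1 ≠ a2) (f12' : b1 ≠ b2)
    (e13 : a1 ≠ a3) (e13' : a1 ≠ b3) (f13 : b1 ≠ a3) (f13' : b1 ≠ b3)
    (e23 : a2 ≠ a3) (e23' : a2 ≠ b3) (f23 : b2 ≠ a3) (f23' : b2 ≠ b3) : False := by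
  classical
  have hmem : 3 ∈ {m | ∃ s : Set (Sym2 W), s ⊆ G.edgeSet ∧
      (s.Pairwise fun e f => ∀ x, x ∈ e → x ∉ f) ∧ s.ncard = m} := by
    refine ⟨{s(a1, b1), s(a2, b2), s(a3, b3)}, ?_, ?_, ?_⟩
    · rintro e (rfl | rfl | rfl) <;> assumption
    · intro e he f hf hnef
      simp only [Set.mem_insert_iff, Set.mem_singleton_iff] at he hf
      rcases he with rfl | rfl | rfl <;> rcases hf with rfl | rfl | rfl <;>
        first
          | exact absurd rfl hnef
          | exact sym2_disj (by assumption) (by assumption) (by assumption) (by assumption)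
          | exact sym2_disj (Ne.symm (by assumption)) (Ne.symm (by assumption))
              (Ne.symm (by assumption)) (Ne.symm (by assumption))
    · exact Set.ncard_eq_three.2 ⟨_, _, _, sym2_ne e12 e12', sym2_ne e13 e13',
        sym2_ne e23 e23', rfl⟩
  have h3le : 3 ≤ matchNum G := le_csSup matchSet_bdd hmem
  omega

end Match

structure DS {V : Type*} (T : SimpleGraph V) (u v : V) (A B : Finset V) : Prop where
  conn : T.Connected
  huv : T.Adj u v
  hAadj : ∀ x ∈ A, T.Adj u x
  hBadj : ∀ y ∈ B, T.Adj v y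
  total : ∀ x, x = u ∨ x = v ∨ x ∈ A ∨ x ∈ B
  hAleaf : ∀ x ∈ A, ∀ t, T.Adj x t → t = u
  hBleaf : ∀ y ∈ B, ∀ t, T.Adj y t → t = v
  hAdisj : ∀ x ∈ A, x ≠ u ∧ x ≠ v ∧ x ∉ B
  hBdisj : ∀ y ∈ B, y ≠ u ∧ y ≠ v ∧ y ∉ A
  hAne : A.Nonempty
  hBne : B.Nonempty

namespace DS

variable {V : Type*} [DecidableEq V] {T : SimpleGraph V} {u v : V} {A B : Finset V}

lemma symm (h : DS T u v A B) : DS T v u B A where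
  conn := h.conn
  huv := h.huv.symm
  hAadj := h.hBadj
  hBadj := h.hAadj
  total := fun x => by rcases h.total x with h' | h' | h' | h' <;> tauto
  hAleaf := h.hBleaf
  hBleaf := h.hAleaf
  hAdisj := fun y hy => ⟨(h.hBdisj y hy).2.1, (h.hBdisj y hy).1, (h.hBdisj y hy).2.2⟩
  hBdisj := fun x hx => ⟨(h.hAdisj x hx).2.1, (h.hAdisj x hx).1, (h.hAdisj x hx).2.2⟩
  hAne := h.hBne
  hBne := h.hAne

lemma une (h : DS T u v A B) : u ≠ v := h.huv.ne
lemma uA (h : DS T u v A B) : u ∉ A := fun hu => (h.hAdisj u hu).1 rfl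
lemma vA (h : DS T u v A B) : v ∉ A := fun hv => (h.hAdisj v hv).2.1 rfl
lemma uB (h : DS T u v A B) : u ∉ B := fun hu => (h.hBdisj u hu).1 rfl
lemma vB (h : DS T u v A B) : v ∉ B := fun hv => (h.hBdisj v hv).2.1 rfl

lemma adj_u (h : DS T u v A B) {t : V} (ht : T.Adj u t) : t = v ∨ t ∈ A := by
  rcases h.total t with rfl | rfl | h' | h'
  · exact absurd ht (T.irrefl)
  · exact Or.inl rfl
  · exact Or.inr h'
  · exact absurd (h.hBleaf t h' u ht.symm) h.une

lemma adj_cases (h : DS T u v A B) {s t : V} (hadj : T.Adj s t) :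
    (s = u ∧ t = v) ∨ (s = v ∧ t = u) ∨ (s = u ∧ t ∈ A) ∨ (t = u ∧ s ∈ A) ∨
      (s = v ∧ t ∈ B) ∨ (t = v ∧ s ∈ B) := by
  rcases h.total s with rfl | rfl | h' | h'
  · rcases h.adj_u hadj with rfl | h'' <;> tauto
  · rcases h.symm.adj_u hadj with rfl | h'' <;> tauto
  · have := h.hAleaf s h' t hadj; tauto
  · have := h.hBleaf s h' t hadj; tauto

lemma dist_u_le (h : DS T u v A B) (y : V) : T.dist u y ≤ 2 := by
  rcases h.total y with rfl | rfl | h' | h'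
  · rw [SimpleGraph.dist_self]; omega
  · rw [SimpleGraph.dist_eq_one_iff_adj.2 h.huv]; omega
  · rw [SimpleGraph.dist_eq_one_iff_adj.2 (h.hAadj y h')]; omega
  · have := T.dist_le (SimpleGraph.Walk.cons h.huv
      (SimpleGraph.Walk.cons (h.hBadj y h') SimpleGraph.Walk.nil))
    simpa using this

lemma dist_u_B (h : DS T u v A B) {y : V} (hy : y ∈ B) : T.dist u y = 2 := by
  have h1 := h.dist_u_le y
  have h2 : T.dist u y ≠ 0 := by
    have := h.conn.pos_dist_of_ne (Ne.symm (h.hBdisj y hy).1)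
    omega
  have h3 : T.dist u y ≠ 1 := by
    rw [Ne, SimpleGraph.dist_eq_one_iff_adj]
    intro hadj
    rcases h.adj_u hadj with rfl | h'
    · exact h.vB hy
    · exact (h.hBdisj y hy).2.2 h'
  omega

lemma ecc_u [Fintype V] (h : DS T u v A B) : ecc T u = 2 := by
  obtain ⟨y₀, hy₀⟩ := h.hBne
  exact ecc_eq_of h.conn h.dist_u_le (h.dist_u_B hy₀).ge

lemma ecc_A [Fintype V] (h : DS T u v A B) {x : V} (hx : x ∈ A) : ecc T x = 3 := by
  obtain ⟨y₀, hy₀⟩ := h.hBne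
  have hxu : T.dist x u = 1 := SimpleGraph.dist_eq_one_iff_adj.2 (h.hAadj x hx).symm
  refine ecc_eq_of h.conn (fun y => ?_) (y₀ := y₀) ?_
  · have := h.conn.dist_triangle (u := x) (v := u) (w := y)
    have := h.dist_u_le y
    omega
  · set f : V → ℕ := fun t =>
      if t = x then 0 else if t = u then 1 else if t = v then 2 else if t ∈ A then 2 else 3
      with hf
    have fx : f x = 0 := by simp [hf]
    have fu : f u = 1 := by simp [hf, Ne.symm (h.hAdisj x hx).1, h.uA]
    have fv : f v = 2 := by simp [hf, Ne.symm (h.hAdisj x hx).2.1, Ne.symm h.une]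
    have fA : ∀ t ∈ A, f t = 0 ∨ f t = 2 := by
      intro t ht
      by_cases hxt : t = x
      · subst hxt; left; exact fx
      · right
        simp [hf, hxt, (h.hAdisj t ht).1, (h.hAdisj t ht).2.1, ht]
    have fB : ∀ t ∈ B, f t = 3 := by
      intro t ht
      have : t ≠ x := fun he => (h.hBdisj t ht).2.2 (he ▸ hx)
      simp [hf, this, (h.hBdisj t ht).1, (h.hBdisj t ht).2.1,
        fun hA' => (h.hBdisj t ht).2.2 hA']
    have hlip : ∀ s t, T.Adj s t → f t ≤ f s + 1 := by
      intro s t hadj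
      rcases h.adj_cases hadj with ⟨rfl, rfl⟩ | ⟨rfl, rfl⟩ | ⟨rfl, ht⟩ | ⟨rfl, hs⟩ |
        ⟨rfl, ht⟩ | ⟨rfl, hs⟩
      · rw [fu, fv]
      · rw [fu, fv]; omega
      · rcases fA t ht with h' | h' <;> rw [fu, h'] <;> omega
      · rcases fA s hs with h' | h' <;> rw [fu, h'] <;> omega
      · rw [fv, fB t ht]
      · rw [fv, fB s hs]; omega
    have := dist_ge_lip h.conn f hlip (y := y₀) fx
    rw [fB y₀ hy₀] at this
    exact this

lemma nbr_u (h : DS T u v A B) : T.neighborSet u = ↑(insert v A) := by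
  ext t
  simp only [SimpleGraph.mem_neighborSet, Finset.coe_insert, Set.mem_insert_iff,
    Finset.mem_coe]
  constructor
  · exact h.adj_u
  · rintro (rfl | ht)
    · exact h.huv
    · exact h.hAadj t ht

lemma deg_u (h : DS T u v A B) : (T.neighborSet u).ncard = A.card + 1 := by
  rw [h.nbr_u, Set.ncard_coe_finset, Finset.card_insert_of_notMem h.vA]

lemma nbr_A (h : DS T u v A B) {x : V} (hx : x ∈ A) : T.neighborSet x = {u} := by
  ext t
  simp only [SimpleGraph.mem_neighborSet, Set.mem_singleton_iff]
  exact ⟨h.hAleaf x hx t, fun ht => ht ▸ (h.hAadj x hx).symm⟩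

lemma deg_A (h : DS T u v A B) {x : V} (hx : x ∈ A) : (T.neighborSet x).ncard = 1 := by
  rw [h.nbr_A hx, Set.ncard_singleton]

lemma univ_eq [Fintype V] (h : DS T u v A B) : (Finset.univ : Finset V) = insert u (insert v (A ∪ B)) := by
  ext x
  simp only [Finset.mem_univ, true_iff, Finset.mem_insert, Finset.mem_union]
  rcases h.total x with rfl | rfl | h' | h' <;> tauto

lemma disjAB (h : DS T u v A B) : Disjoint A B :=
  Finset.disjoint_left.2 fun {x} hx => (h.hAdisj x hx).2.2

lemma card_eq [Fintype V] (h : DS T u v A B) : Fintype.card V = A.card + B.card + 2 := by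
  rw [← Finset.card_univ, h.univ_eq, Finset.card_insert_of_notMem (by
      simp only [Finset.mem_insert, Finset.mem_union]
      push_neg
      exact ⟨h.une, h.uA, h.uB⟩),
    Finset.card_insert_of_notMem (by
      simp only [Finset.mem_union]
      push_neg
      exact ⟨h.vA, h.vB⟩),
    Finset.card_union_of_disjoint h.disjAB]

lemma ree_eq [Fintype V] (h : DS T u v A B) : ree T = (5 * (Fintype.card V : ℝ) - 4) / 6 := by
  classical
  rw [ree_eq_sum, h.univ_eq]
  rw [Finset.sum_insert (by
      simp only [Finset.mem_insert, Finset.mem_union]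
      push_neg
      exact ⟨h.une, h.uA, h.uB⟩),
    Finset.sum_insert (by
      simp only [Finset.mem_union]
      push_neg
      exact ⟨h.vA, h.vB⟩),
    Finset.sum_union h.disjAB]
  have hu' : ((T.neighborSet u).ncard : ℝ) * (1 / (ecc T u : ℝ))
      = (A.card + 1) * (1 / 2) := by rw [h.deg_u, h.ecc_u]; push_cast; ring
  have hv' : ((T.neighborSet v).ncard : ℝ) * (1 / (ecc T v : ℝ))
      = (B.card + 1) * (1 / 2) := by rw [h.symm.deg_u, h.symm.ecc_u]; push_cast; ring
  have hA' : ∑ x ∈ A, ((T.neighborSet x).ncard : ℝ) * (1 / (ecc T x : ℝ))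
      = A.card * (1 / 3) := by
    have hcongr : ∀ x ∈ A, ((T.neighborSet x).ncard : ℝ) * (1 / (ecc T x : ℝ))
        = 1 / 3 := by
      intro x hx
      rw [h.deg_A hx, h.ecc_A hx]
      norm_num
    rw [Finset.sum_congr rfl hcongr, Finset.sum_const, nsmul_eq_mul]
  have hB' : ∑ y ∈ B, ((T.neighborSet y).ncard : ℝ) * (1 / (ecc T y : ℝ))
      = B.card * (1 / 3) := by
    have hcongr : ∀ y ∈ B, ((T.neighborSet y).ncard : ℝ) * (1 / (ecc T y : ℝ))
        = 1 / 3 := by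
      intro y hy
      rw [h.symm.deg_A hy, h.symm.ecc_A hy]
      norm_num
    rw [Finset.sum_congr rfl hcongr, Finset.sum_const, nsmul_eq_mul]
  rw [hu', hv', hA', hB', h.card_eq]
  push_cast
  ring

end DS

structure DS2 {V : Type*} (T : SimpleGraph V) (u v w : V) (A B : Finset V) : Prop where
  conn : T.Connected
  hune : u ≠ v
  hnadj : ¬T.Adj u v
  huw : T.Adj u w
  hwv : T.Adj w v
  hAadj : ∀ x ∈ A, T.Adj u x
  hBadj : ∀ y ∈ B, T.Adj v y
  total : ∀ x, x = u ∨ x = v ∨ x = w ∨ x ∈ A ∨ x ∈ B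
  hAleaf : ∀ x ∈ A, ∀ t, T.Adj x t → t = u
  hBleaf : ∀ y ∈ B, ∀ t, T.Adj y t → t = v
  hwleaf : ∀ t, T.Adj w t → t = u ∨ t = v
  hAdisj : ∀ x ∈ A, x ≠ u ∧ x ≠ v ∧ x ≠ w ∧ x ∉ B
  hBdisj : ∀ y ∈ B, y ≠ u ∧ y ≠ v ∧ y ≠ w ∧ y ∉ A
  hAne : A.Nonempty
  hBne : B.Nonempty

namespace DS2

variable {V : Type*} [DecidableEq V] {T : SimpleGraph V} {u v w : V} {A B : Finset V}

lemma symm (h : DS2 T u v w A B) : DS2 T v u w B A where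
  conn := h.conn
  hune := h.hune.symm
  hnadj := fun ha => h.hnadj ha.symm
  huw := h.hwv.symm
  hwv := h.huw.symm
  hAadj := h.hBadj
  hBadj := h.hAadj
  total := fun x => by rcases h.total x with h' | h' | h' | h' | h' <;> tauto
  hAleaf := h.hBleaf
  hBleaf := h.hAleaf
  hwleaf := fun t ht => (h.hwleaf t ht).symm
  hAdisj := fun y hy => ⟨(h.hBdisj y hy).2.1, (h.hBdisj y hy).1, (h.hBdisj y hy).2.2.1,
    (h.hBdisj y hy).2.2.2⟩
  hBdisj := fun x hx => ⟨(h.hAdisj x hx).2.1, (h.hAdisj x hx).1, (h.hAdisj x hx).2.2.1,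
    (h.hAdisj x hx).2.2.2⟩
  hAne := h.hBne
  hBne := h.hAne

lemma wu (h : DS2 T u v w A B) : w ≠ u := h.huw.ne'
lemma wv' (h : DS2 T u v w A B) : w ≠ v := h.hwv.ne
lemma uA (h : DS2 T u v w A B) : u ∉ A := fun hu => (h.hAdisj u hu).1 rfl
lemma vA (h : DS2 T u v w A B) : v ∉ A := fun hv => (h.hAdisj v hv).2.1 rfl
lemma wA (h : DS2 T u v w A B) : w ∉ A := fun hw => (h.hAdisj w hw).2.2.1 rfl
lemma uB (h : DS2 T u v w A B) : u ∉ B := fun hu => (h.hBdisj u hu).1 rfl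
lemma vB (h : DS2 T u v w A B) : v ∉ B := fun hv => (h.hBdisj v hv).2.1 rfl
lemma wB (h : DS2 T u v w A B) : w ∉ B := fun hw => (h.hBdisj w hw).2.2.1 rfl

lemma adj_u (h : DS2 T u v w A B) {t : V} (ht : T.Adj u t) : t = w ∨ t ∈ A := by
  rcases h.total t with rfl | rfl | rfl | h' | h'
  · exact absurd ht (T.irrefl)
  · exact absurd ht h.hnadj
  · exact Or.inl rfl
  · exact Or.inr h'
  · exact absurd (h.hBleaf t h' u ht.symm) h.hune

lemma adj_cases (h : DS2 T u v w A B) {s t : V} (hadj : T.Adj s t) :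
    (s = u ∧ t = w) ∨ (s = w ∧ t = u) ∨ (s = w ∧ t = v) ∨ (s = v ∧ t = w) ∨
      (s = u ∧ t ∈ A) ∨ (t = u ∧ s ∈ A) ∨ (s = v ∧ t ∈ B) ∨ (t = v ∧ s ∈ B) := by
  rcases h.total s with rfl | rfl | rfl | h' | h'
  · rcases h.adj_u hadj with rfl | h'' <;> tauto
  · rcases h.symm.adj_u hadj with rfl | h'' <;> tauto
  · rcases h.hwleaf t hadj with rfl | rfl <;> tauto
  · have := h.hAleaf s h' t hadj; tauto
  · have := h.hBleaf s h' t hadj; tauto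

lemma dist_w_le (h : DS2 T u v w A B) (y : V) : T.dist w y ≤ 2 := by
  rcases h.total y with rfl | rfl | rfl | h' | h'
  · rw [SimpleGraph.dist_eq_one_iff_adj.2 h.huw.symm] <;> omega
  · rw [SimpleGraph.dist_eq_one_iff_adj.2 h.hwv] <;> omega
  · rw [SimpleGraph.dist_self] <;> omega
  · have := T.dist_le (SimpleGraph.Walk.cons h.huw.symm
      (SimpleGraph.Walk.cons (h.hAadj y h') SimpleGraph.Walk.nil))
    simpa using this
  · have := T.dist_le (SimpleGraph.Walk.cons h.hwv
      (SimpleGraph.Walk.cons (h.hBadj y h') SimpleGraph.Walk.nil))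
    simpa using this

lemma ecc_w [Fintype V] (h : DS2 T u v w A B) : ecc T w = 2 := by
  obtain ⟨y₀, hy₀⟩ := h.hAne
  refine ecc_eq_of h.conn h.dist_w_le (y₀ := y₀) ?_
  have h2 : T.dist w y₀ ≠ 0 := by
    have := h.conn.pos_dist_of_ne (Ne.symm (h.hAdisj y₀ hy₀).2.2.1)
    omega
  have h3 : T.dist w y₀ ≠ 1 := by
    rw [Ne, SimpleGraph.dist_eq_one_iff_adj]
    intro hadj
    rcases h.hwleaf y₀ hadj with rfl | rfl
    · exact h.uA hy₀
    · exact h.vA hy₀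
  have := h.dist_w_le y₀
  omega

lemma dist_u_le (h : DS2 T u v w A B) (y : V) : T.dist u y ≤ 3 := by
  rcases h.total y with rfl | rfl | rfl | h' | h'
  · rw [SimpleGraph.dist_self] <;> omega
  · have := T.dist_le (SimpleGraph.Walk.cons h.huw
      (SimpleGraph.Walk.cons h.hwv SimpleGraph.Walk.nil))
    simp at this <;> omega
  · rw [SimpleGraph.dist_eq_one_iff_adj.2 h.huw] <;> omega
  · rw [SimpleGraph.dist_eq_one_iff_adj.2 (h.hAadj y h')] <;> omega
  · have := T.dist_le (SimpleGraph.Walk.cons h.huw (SimpleGraph.Walk.cons h.hwv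
      (SimpleGraph.Walk.cons (h.hBadj y h') SimpleGraph.Walk.nil)))
    simpa using this

lemma ecc_u [Fintype V] (h : DS2 T u v w A B) : ecc T u = 3 := by
  obtain ⟨y₀, hy₀⟩ := h.hBne
  refine ecc_eq_of h.conn h.dist_u_le (y₀ := y₀) ?_
  set f : V → ℕ := fun t =>
    if t = u then 0 else if t = w then 1 else if t ∈ A then 1 else if t = v then 2 else 3
    with hf
  have fu : f u = 0 := by simp [hf]
  have fw : f w = 1 := by simp [hf, h.wu, h.wA]
  have fv : f v = 2 := by simp [hf, Ne.symm h.hune, Ne.symm h.wv', h.vA]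
  have fA : ∀ t ∈ A, f t = 1 := by
    intro t ht
    simp [hf, (h.hAdisj t ht).1, (h.hAdisj t ht).2.2.1, ht]
  have fB : ∀ t ∈ B, f t = 3 := by
    intro t ht
    simp [hf, (h.hBdisj t ht).1, (h.hBdisj t ht).2.2.1, (h.hBdisj t ht).2.1,
      (h.hBdisj t ht).2.2.2]
  have hlip : ∀ s t, T.Adj s t → f t ≤ f s + 1 := by
    intro s t hadj
    rcases h.adj_cases hadj with ⟨rfl, rfl⟩ | ⟨rfl, rfl⟩ | ⟨rfl, rfl⟩ | ⟨rfl, rfl⟩ |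
      ⟨rfl, ht⟩ | ⟨rfl, hs⟩ | ⟨rfl, ht⟩ | ⟨rfl, hs⟩
    · rw [fu, fw]
    · rw [fu, fw] <;> omega
    · rw [fv, fw] <;> omega
    · rw [fv, fw] <;> omega
    · rw [fu, fA t ht] <;> omega
    · rw [fu, fA s hs] <;> omega
    · rw [fv, fB t ht] <;> omega
    · rw [fv, fB s hs] <;> omega
  have := dist_ge_lip h.conn f hlip (y := y₀) fu
  rw [fB y₀ hy₀] at this
  exact this

lemma ecc_A [Fintype V] (h : DS2 T u v w A B) {x : V} (hx : x ∈ A) : ecc T x = 4 := by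
  obtain ⟨y₀, hy₀⟩ := h.hBne
  have hxu : T.dist x u = 1 := SimpleGraph.dist_eq_one_iff_adj.2 (h.hAadj x hx).symm
  refine ecc_eq_of h.conn (fun y => ?_) (y₀ := y₀) ?_
  · have := h.conn.dist_triangle (u := x) (v := u) (w := y)
    have := h.dist_u_le y
    omega
  · set f : V → ℕ := fun t =>
      if t = x then 0 else if t = u then 1 else if t = w then 2 else if t ∈ A then 2
        else if t = v then 3 else 4
      with hf
    have fx : f x = 0 := by simp [hf]
    have fu : f u = 1 := by simp [hf, Ne.symm (h.hAdisj x hx).1]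
    have fw : f w = 2 := by
      have : w ≠ x := fun he => h.wA (he ▸ hx)
      simp [hf, this, h.wu, h.wA]
    have fv : f v = 3 := by
      have : v ≠ x := fun he => h.vA (he ▸ hx)
      simp [hf, this, Ne.symm h.hune, Ne.symm h.wv', h.vA]
    have fA : ∀ t ∈ A, f t = 0 ∨ f t = 2 := by
      intro t ht
      by_cases hxt : t = x
      · subst hxt; left; exact fx
      · right
        simp [hf, hxt, (h.hAdisj t ht).1, (h.hAdisj t ht).2.2.1, ht]
    have fB : ∀ t ∈ B, f t = 4 := by
      intro t ht
      have : t ≠ x := fun he => (h.hBdisj t ht).2.2.2 (he ▸ hx)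
      simp [hf, this, (h.hBdisj t ht).1, (h.hBdisj t ht).2.2.1, (h.hBdisj t ht).2.1,
        (h.hBdisj t ht).2.2.2]
    have hlip : ∀ s t, T.Adj s t → f t ≤ f s + 1 := by
      intro s t hadj
      rcases h.adj_cases hadj with ⟨rfl, rfl⟩ | ⟨rfl, rfl⟩ | ⟨rfl, rfl⟩ | ⟨rfl, rfl⟩ |
        ⟨rfl, ht⟩ | ⟨rfl, hs⟩ | ⟨rfl, ht⟩ | ⟨rfl, hs⟩
      · rw [fu, fw]
      · rw [fu, fw] <;> omega
      · rw [fv, fw] <;> omega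
      · rw [fv, fw] <;> omega
      · rcases fA t ht with h' | h' <;> rw [fu, h'] <;> omega
      · rcases fA s hs with h' | h' <;> rw [fu, h'] <;> omega
      · rw [fv, fB t ht]
      · rw [fv, fB s hs] <;> omega
    have := dist_ge_lip h.conn f hlip (y := y₀) fx
    rw [fB y₀ hy₀] at this
    exact this

lemma nbr_u (h : DS2 T u v w A B) : T.neighborSet u = ↑(insert w A) := by
  ext t
  simp only [SimpleGraph.mem_neighborSet, Finset.coe_insert, Set.mem_insert_iff,
    Finset.mem_coe]
  constructor
  · exact h.adj_u
  · rintro (rfl | ht)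
    · exact h.huw
    · exact h.hAadj t ht

lemma deg_u (h : DS2 T u v w A B) : (T.neighborSet u).ncard = A.card + 1 := by
  rw [h.nbr_u, Set.ncard_coe_finset, Finset.card_insert_of_notMem h.wA]

lemma nbr_w (h : DS2 T u v w A B) : T.neighborSet w = {u, v} := by
  ext t
  simp only [SimpleGraph.mem_neighborSet, Set.mem_insert_iff, Set.mem_singleton_iff]
  constructor
  · exact h.hwleaf t
  · rintro (rfl | rfl)
    · exact h.huw.symm
    · exact h.hwv

lemma deg_w (h : DS2 T u v w A B) : (T.neighborSet w).ncard = 2 := by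
  rw [h.nbr_w, Set.ncard_pair h.hune]

lemma nbr_A (h : DS2 T u v w A B) {x : V} (hx : x ∈ A) : T.neighborSet x = {u} := by
  ext t
  simp only [SimpleGraph.mem_neighborSet, Set.mem_singleton_iff]
  exact ⟨h.hAleaf x hx t, fun ht => ht ▸ (h.hAadj x hx).symm⟩

lemma deg_A (h : DS2 T u v w A B) {x : V} (hx : x ∈ A) : (T.neighborSet x).ncard = 1 := by
  rw [h.nbr_A hx, Set.ncard_singleton]

lemma univ_eq [Fintype V] (h : DS2 T u v w A B) :
    (Finset.univ : Finset V) = insert u (insert v (insert w (A ∪ B))) := by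
  ext x
  simp only [Finset.mem_univ, true_iff, Finset.mem_insert, Finset.mem_union]
  rcases h.total x with rfl | rfl | rfl | h' | h' <;> tauto

lemma disjAB (h : DS2 T u v w A B) : Disjoint A B :=
  Finset.disjoint_left.2 fun {x} hx => (h.hAdisj x hx).2.2.2

lemma hu_not (h : DS2 T u v w A B) : u ∉ insert v (insert w (A ∪ B)) := by
  simp only [Finset.mem_insert, Finset.mem_union]
  push_neg
  exact ⟨h.hune, Ne.symm h.wu, h.uA, h.uB⟩

lemma hv_not (h : DS2 T u v w A B) : v ∉ insert w (A ∪ B) := by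
  simp only [Finset.mem_insert, Finset.mem_union]
  push_neg
  exact ⟨Ne.symm h.wv', h.vA, h.vB⟩

lemma hw_not (h : DS2 T u v w A B) : w ∉ A ∪ B := by
  simp only [Finset.mem_union]
  push_neg
  exact ⟨h.wA, h.wB⟩

lemma card_eq [Fintype V] (h : DS2 T u v w A B) :
    Fintype.card V = A.card + B.card + 3 := by
  rw [← Finset.card_univ, h.univ_eq, Finset.card_insert_of_notMem h.hu_not,
    Finset.card_insert_of_notMem h.hv_not, Finset.card_insert_of_notMem h.hw_not,
    Finset.card_union_of_disjoint h.disjAB]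

lemma ree_eq [Fintype V] (h : DS2 T u v w A B) :
    ree T = (7 * (Fintype.card V : ℝ) - 1) / 12 := by
  classical
  rw [ree_eq_sum, h.univ_eq]
  rw [Finset.sum_insert h.hu_not, Finset.sum_insert h.hv_not, Finset.sum_insert h.hw_not,
    Finset.sum_union h.disjAB]
  have hu' : ((T.neighborSet u).ncard : ℝ) * (1 / (ecc T u : ℝ))
      = (A.card + 1) * (1 / 3) := by rw [h.deg_u, h.ecc_u]; push_cast; ring
  have hv' : ((T.neighborSet v).ncard : ℝ) * (1 / (ecc T v : ℝ))
      = (B.card + 1) * (1 / 3) := by rw [h.symm.deg_u, h.symm.ecc_u]; push_cast; ring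
  have hw' : ((T.neighborSet w).ncard : ℝ) * (1 / (ecc T w : ℝ)) = 1 := by
    rw [h.deg_w, h.ecc_w]; norm_num
  have hA' : ∑ x ∈ A, ((T.neighborSet x).ncard : ℝ) * (1 / (ecc T x : ℝ))
      = A.card * (1 / 4) := by
    have hcongr : ∀ x ∈ A, ((T.neighborSet x).ncard : ℝ) * (1 / (ecc T x : ℝ))
        = 1 / 4 := by
      intro x hx
      rw [h.deg_A hx, h.ecc_A hx]
      norm_num
    rw [Finset.sum_congr rfl hcongr, Finset.sum_const, nsmul_eq_mul]
  have hB' : ∑ y ∈ B, ((T.neighborSet y).ncard : ℝ) * (1 / (ecc T y : ℝ))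
      = B.card * (1 / 4) := by
    have hcongr : ∀ y ∈ B, ((T.neighborSet y).ncard : ℝ) * (1 / (ecc T y : ℝ))
        = 1 / 4 := by
      intro y hy
      rw [h.symm.deg_A hy, h.symm.ecc_A hy]
      norm_num
    rw [Finset.sum_congr rfl hcongr, Finset.sum_const, nsmul_eq_mul]
  rw [hu', hv', hw', hA', hB', h.card_eq]
  push_cast
  ring

end DS2

section Classify

variable {V : Type*} [Fintype V] {T : SimpleGraph V}

def Cover (T : SimpleGraph V) (u v : V) : Prop :=
  ∀ s t, T.Adj s t → s = u ∨ s = v ∨ t = u ∨ t = v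

/-- The common conclusion of the classification. -/
def Shapes (T : SimpleGraph V) : Prop :=
  (∃ c1 c2, T.Adj c1 c2 ∧ Cover T c1 c2) ∨
  (∃ c1 c2 m, c1 ≠ c2 ∧ ¬T.Adj c1 c2 ∧ T.Adj c1 m ∧ T.Adj m c2 ∧ m ≠ c1 ∧ m ≠ c2 ∧
    Cover T c1 c2)

lemma caseA' (hT : T.IsTree) (hm : matchNum T = 2) {u u₂ v v₂ : V}
    (h1 : T.Adj u u₂) (h2 : T.Adj v v₂) (huv : T.Adj u v)
    (d1 : u ≠ v) (d2 : u ≠ v₂) (d3 : u₂ ≠ v) (d4 : u₂ ≠ v₂)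
    (cov4 : ∀ s t, T.Adj s t →
      (s = u ∨ s = u₂ ∨ s = v ∨ s = v₂) ∨ (t = u ∨ t = u₂ ∨ t = v ∨ t = v₂))
    (hZv : ∀ z, T.Adj v₂ z → z = v) : Shapes T := by
  have nAu₂v : ¬T.Adj u₂ v := fun h => tri hT huv h.symm h1
  have nAuv₂ : ¬T.Adj u v₂ := fun h => tri hT huv h2 h
  have nAu₂v₂ : ¬T.Adj u₂ v₂ := fun h => c4 hT h1 h h2.symm huv.symm d2 d3
  by_cases hZu : ∃ z, T.Adj u₂ z ∧ z ≠ u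
  · obtain ⟨z, hz, hzu⟩ := hZu
    have hzv : z ≠ v := fun he => nAu₂v (he ▸ hz)
    have hzv₂ : z ≠ v₂ := fun he => nAu₂v₂ (he ▸ hz)
    refine Or.inr ⟨u₂, v, u, d3, nAu₂v, h1.symm, huv, h1.ne, d1, ?_⟩
    have aux : ∀ s t, T.Adj s t → s ≠ u₂ → s ≠ v → t ≠ u₂ → t ≠ v →
        (s = u ∨ s = v₂) → False := by
      rintro s t hst hs1 hs2 ht1 ht2 (rfl | rfl)
      · -- s = u
        have htv₂ : t ≠ v₂ := fun he => nAuv₂ (he ▸ hst)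
        have htz : t ≠ z := by
          rintro rfl
          exact tri hT h1 hz hst
        exact no_three_matching hm hst hz h2
          h1.ne (Ne.symm hzu) ht1 htz d1 d2 ht2 htv₂ d3 d4 hzv hzv₂
      · -- s = v₂
        exact ht2 (hZv t hst)
    intro s t hst
    by_contra hcon
    push_neg at hcon
    obtain ⟨hs1, hs2, ht1, ht2⟩ := hcon
    rcases cov4 s t hst with (rfl | rfl | rfl | rfl) | (rfl | rfl | rfl | rfl)
    · exact aux s t hst hs1 hs2 ht1 ht2 (Or.inl rfl)
    · exact hs1 rfl
    · exact hs2 rfl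
    · exact aux s t hst hs1 hs2 ht1 ht2 (Or.inr rfl)
    · exact aux t s hst.symm ht1 ht2 hs1 hs2 (Or.inl rfl)
    · exact ht1 rfl
    · exact ht2 rfl
    · exact aux t s hst.symm ht1 ht2 hs1 hs2 (Or.inr rfl)
  · push_neg at hZu
    refine Or.inl ⟨u, v, huv, ?_⟩
    intro s t hst
    rcases cov4 s t hst with (rfl | rfl | rfl | rfl) | (rfl | rfl | rfl | rfl)
    · exact Or.inl rfl
    · exact Or.inr (Or.inr (Or.inl (hZu t hst)))
    · exact Or.inr (Or.inl rfl)
    · exact Or.inr (Or.inr (Or.inr (hZv t hst)))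
    · exact Or.inr (Or.inr (Or.inl rfl))
    · exact Or.inl (hZu s hst.symm)
    · exact Or.inr (Or.inr (Or.inr rfl))
    · exact Or.inr (Or.inl (hZv s hst.symm))

lemma caseA (hT : T.IsTree) (hm : matchNum T = 2) {u u₂ v v₂ : V}
    (h1 : T.Adj u u₂) (h2 : T.Adj v v₂) (huv : T.Adj u v)
    (d1 : u ≠ v) (d2 : u ≠ v₂) (d3 : u₂ ≠ v) (d4 : u₂ ≠ v₂)
    (cov4 : ∀ s t, T.Adj s t →
      (s = u ∨ s = u₂ ∨ s = v ∨ s = v₂) ∨ (t = u ∨ t = u₂ ∨ t = v ∨ t = v₂)) :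
    Shapes T := by
  have nAu₂v : ¬T.Adj u₂ v := fun h => tri hT huv h.symm h1
  have nAuv₂ : ¬T.Adj u v₂ := fun h => tri hT huv h2 h
  have nAu₂v₂ : ¬T.Adj u₂ v₂ := fun h => c4 hT h1 h h2.symm huv.symm d2 d3
  by_cases hZv : ∀ z, T.Adj v₂ z → z = v
  · exact caseA' hT hm h1 h2 huv d1 d2 d3 d4 cov4 hZv
  · push_neg at hZv
    obtain ⟨z', hz', hz'v⟩ := hZv
    by_cases hZu : ∀ z, T.Adj u₂ z → z = u
    · exact caseA' hT hm h2 h1 huv.symm d1.symm d3.symm d2.symm d4.symm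
        (fun s t hst => by have := cov4 s t hst; tauto) hZu
    · push_neg at hZu
      obtain ⟨z, hz, hzu⟩ := hZu
      exfalso
      have hzv : z ≠ v := fun he => nAu₂v (he ▸ hz)
      have hzv₂ : z ≠ v₂ := fun he => nAu₂v₂ (he ▸ hz)
      have hz'u : z' ≠ u := fun he => nAuv₂ (he ▸ hz').symm
      have hz'u₂ : z' ≠ u₂ := fun he => nAu₂v₂ (he ▸ hz').symm
      by_cases hzz : z = z'
      · subst hzz
        exact c5 hT hz.symm h1.symm huv h2 hz' hzu hzv d2
      · exact no_three_matching hm hz hz' huv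
          d4 (Ne.symm hz'u₂) hzv₂ hzz h1.ne' d3 hzu hzv
          (Ne.symm d2) h2.ne' hz'u hz'v

lemma caseB (hT : T.IsTree) (hm : matchNum T = 2) {u u₂ v v₂ w : V}
    (h1 : T.Adj u u₂) (h2 : T.Adj v v₂) (huw : T.Adj u w) (hwv : T.Adj w v)
    (d1 : u ≠ v) (d2 : u ≠ v₂) (d3 : u₂ ≠ v) (d4 : u₂ ≠ v₂)
    (hwu : w ≠ u) (hwu₂ : w ≠ u₂) (hwv' : w ≠ v) (hwv₂ : w ≠ v₂)
    (cov4 : ∀ s t, T.Adj s t →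
      (s = u ∨ s = u₂ ∨ s = v ∨ s = v₂) ∨ (t = u ∨ t = u₂ ∨ t = v ∨ t = v₂))
    (nuv₂ : ¬T.Adj u v₂) (nu₂v : ¬T.Adj u₂ v) (nu₂v₂ : ¬T.Adj u₂ v₂) :
    Cover T u v := by
  have aux : ∀ s t, T.Adj s t → s ≠ u → s ≠ v → t ≠ u → t ≠ v →
      (s = u₂ ∨ s = v₂) → False := by
    rintro s t hst hs1 hs2 ht1 ht2 (rfl | rfl)
    · have htw : t ≠ w := by
        rintro rfl
        exact tri hT h1 hst huw
      have htv₂ : t ≠ v₂ := fun he => nu₂v₂ (he ▸ hst)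
      exact no_three_matching hm hst huw h2
        h1.ne' hwu₂.symm ht1 htw d3 d4 ht2 htv₂ d1 d2 hwv' hwv₂
    · have htw : t ≠ w := by
        rintro rfl
        exact tri hT h2 hst hwv.symm
      have htu₂ : t ≠ u₂ := fun he => nu₂v₂ (he ▸ hst).symm
      exact no_three_matching hm hst hwv.symm h1
        h2.ne' hwv₂.symm ht2 htw d2.symm d4.symm ht1 htu₂ d1.symm d3.symm hwu hwu₂
  intro s t hst
  by_contra hcon
  push_neg at hcon
  obtain ⟨hs1, hs2, ht1, ht2⟩ := hcon
  rcases cov4 s t hst with (rfl | rfl | rfl | rfl) | (rfl | rfl | rfl | rfl)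
  · exact hs1 rfl
  · exact aux s t hst hs1 hs2 ht1 ht2 (Or.inl rfl)
  · exact hs2 rfl
  · exact aux s t hst hs1 hs2 ht1 ht2 (Or.inr rfl)
  · exact ht1 rfl
  · exact aux t s hst.symm ht1 ht2 hs1 hs2 (Or.inl rfl)
  · exact ht2 rfl
  · exact aux t s hst.symm ht1 ht2 hs1 hs2 (Or.inr rfl)

lemma fromPair (hT : T.IsTree) (hm : matchNum T = 2) {p p' q q' : V}
    (hp : T.Adj p p') (hq : T.Adj q q')
    (d1 : p ≠ q) (d2 : p ≠ q') (d3 : p' ≠ q) (d4 : p' ≠ q')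
    (cov4 : ∀ s t, T.Adj s t →
      (s = p ∨ s = p' ∨ s = q ∨ s = q') ∨ (t = p ∨ t = p' ∨ t = q ∨ t = q'))
    (hmin : ∀ a b, (a = p ∨ a = p') → (b = q ∨ b = q') → T.dist p q ≤ T.dist a b) :
    Shapes T := by
  have hconn := hT.isConnected
  have dpos : 0 < T.dist p q := hconn.pos_dist_of_ne d1
  by_cases hd1 : T.dist p q = 1
  · exact caseA hT hm hp hq (SimpleGraph.dist_eq_one_iff_adj.1 hd1) d1 d2 d3 d4 cov4
  · have hge2 : 2 ≤ T.dist p q := by omega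
    have nocross : ∀ a b, (a = p ∨ a = p') → (b = q ∨ b = q') → ¬T.Adj a b := by
      intro a b ha hb hadj
      have h1 := hmin a b ha hb
      rw [SimpleGraph.dist_eq_one_iff_adj.2 hadj] at h1
      omega
    obtain ⟨pw, hlen⟩ := (hconn p q).exists_walk_length_eq_dist
    cases pw with
    | nil => simp only [SimpleGraph.Walk.length_nil] at hlen; omega
    | cons h q1 =>
      rename_i m1
      cases q1 with
      | nil => simp only [SimpleGraph.Walk.length_cons, SimpleGraph.Walk.length_nil] at hlen
               omega
      | cons h' q2 =>
        rename_i m2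
        simp only [SimpleGraph.Walk.length_cons] at hlen
        have hm1q : m1 ≠ q := by rintro rfl; exact nocross p m1 (Or.inl rfl) (Or.inl rfl) h
        have hm1q' : m1 ≠ q' := by
          rintro rfl; exact nocross p m1 (Or.inl rfl) (Or.inr rfl) h
        have hm1p' : m1 ≠ p' := by
          rintro rfl
          have hw := T.dist_le (SimpleGraph.Walk.cons h' q2)
          simp only [SimpleGraph.Walk.length_cons] at hw
          have := hmin m1 q (Or.inr rfl) (Or.inl rfl)
          omega
        have hm1p : m1 ≠ p := h.ne'
        cases q2 with
        | nil =>
          have cover := caseB hT hm hp hq h h' d1 d2 d3 d4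
            hm1p hm1p' hm1q hm1q' cov4
            (nocross p q' (Or.inl rfl) (Or.inr rfl))
            (nocross p' q (Or.inr rfl) (Or.inl rfl))
            (nocross p' q' (Or.inr rfl) (Or.inr rfl))
          exact Or.inr ⟨p, q, m1, d1, nocross p q (Or.inl rfl) (Or.inl rfl),
            h, h', hm1p, hm1q, cover⟩
        | cons h'' q3 =>
          rename_i m3
          exfalso
          simp only [SimpleGraph.Walk.length_cons, SimpleGraph.Walk.length_nil] at hlen
          have hbig : 3 ≤ T.dist p q := by omega
          have hw2 : T.dist p m2 ≤ 2 := by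
            have := T.dist_le (SimpleGraph.Walk.cons h
              (SimpleGraph.Walk.cons h' SimpleGraph.Walk.nil))
            simpa using this
          have hm2q : m2 ≠ q := by
            rintro rfl
            omega
          have hm2q' : m2 ≠ q' := by
            rintro rfl
            have := hmin p m2 (Or.inl rfl) (Or.inr rfl)
            omega
          have hm2p : m2 ≠ p := by
            rintro rfl
            have hw := T.dist_le (SimpleGraph.Walk.cons h'' q3)
            simp only [SimpleGraph.Walk.length_cons] at hw
            omega
          have hm2p' : m2 ≠ p' := by
            rintro rfl
            have hw := T.dist_le (SimpleGraph.Walk.cons h'' q3)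
            simp only [SimpleGraph.Walk.length_cons] at hw
            have := hmin m2 q (Or.inr rfl) (Or.inl rfl)
            omega
          rcases cov4 m1 m2 h' with (h9 | h9 | h9 | h9) | (h9 | h9 | h9 | h9) <;>
            first
              | exact hm1p h9 | exact hm1p' h9 | exact hm1q h9 | exact hm1q' h9
              | exact hm2p h9 | exact hm2p' h9 | exact hm2q h9 | exact hm2q' h9

lemma classify (hT : T.IsTree) (hm : matchNum T = 2) : Shapes T := by
  obtain ⟨x1, y1, x2, y2, h1, h2, e1, e2, e3, e4⟩ := exists_two_matching hm
  have cov4 : ∀ s t, T.Adj s t →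
      (s = x1 ∨ s = y1 ∨ s = x2 ∨ s = y2) ∨ (t = x1 ∨ t = y1 ∨ t = x2 ∨ t = y2) := by
    intro s t hst
    by_contra hcon
    push_neg at hcon
    obtain ⟨⟨a1, a2, a3, a4⟩, b1, b2, b3, b4⟩ := hcon
    exact no_three_matching hm h1 h2 hst e1 e2 e3 e4
      (Ne.symm a1) (Ne.symm b1) (Ne.symm a2) (Ne.symm b2)
      (Ne.symm a3) (Ne.symm b3) (Ne.symm a4) (Ne.symm b4)
  set d11 := T.dist x1 x2 with hd11
  set d12 := T.dist x1 y2 with hd12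
  set d21 := T.dist y1 x2 with hd21
  set d22 := T.dist y1 y2 with hd22
  have hcomm : ∀ a b : V, T.dist a b = T.dist b a := fun a b => T.dist_comm
  have hc : d11 ≤ min (min d11 d12) (min d21 d22) ∨ d12 ≤ min (min d11 d12) (min d21 d22)
      ∨ d21 ≤ min (min d11 d12) (min d21 d22) ∨ d22 ≤ min (min d11 d12) (min d21 d22) := by
    omega
  have hm1 : min (min d11 d12) (min d21 d22) ≤ d11 := by omega
  have hm2 : min (min d11 d12) (min d21 d22) ≤ d12 := by omega
  have hm3 : min (min d11 d12) (min d21 d22) ≤ d21 := by omega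
  have hm4 : min (min d11 d12) (min d21 d22) ≤ d22 := by omega
  rcases hc with hc | hc | hc | hc
  · refine fromPair hT hm h1 h2 e1 e2 e3 e4 cov4 ?_
    rintro a b (rfl | rfl) (rfl | rfl) <;> omega
  · refine fromPair hT hm h1 h2.symm e2 e1 e4 e3
      (fun s t hst => by have := cov4 s t hst; tauto) ?_
    rintro a b (rfl | rfl) (rfl | rfl) <;>
      [skip; rw [hcomm x1 x2]; skip; rw [hcomm y1 x2]] <;> omega
  · refine fromPair hT hm h1.symm h2 e3 e4 e1 e2
      (fun s t hst => by have := cov4 s t hst; tauto) ?_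
    rintro a b (rfl | rfl) (rfl | rfl) <;> omega
  · refine fromPair hT hm h1.symm h2.symm e4 e3 e2 e1
      (fun s t hst => by have := cov4 s t hst; tauto) ?_
    rintro a b (rfl | rfl) (rfl | rfl) <;>
      [skip; rw [hcomm y1 x2]; skip; rw [hcomm x1 x2]] <;> omega

end Classify

section Build

variable {V : Type*} [Fintype V] {T : SimpleGraph V}

lemma cover_nonempty (hm : matchNum T = 2) {u v : V} (hcov : Cover T u v) :
    (∃ x, T.Adj u x ∧ x ≠ v) ∧ (∃ y, T.Adj v y ∧ y ≠ u) := by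
  obtain ⟨x1, y1, x2, y2, h1, h2, e1, e2, e3, e4⟩ := exists_two_matching hm
  have m1 := hcov x1 y1 h1
  have m2 := hcov x2 y2 h2
  constructor
  · by_contra hno
    push_neg at hno
    have hv1 : x1 = v ∨ y1 = v := by
      rcases m1 with h | h | h | h
      · exact Or.inr (hno y1 (h ▸ h1))
      · exact Or.inl h
      · exact Or.inl (hno x1 (h ▸ h1.symm))
      · exact Or.inr h
    have hv2 : x2 = v ∨ y2 = v := by
      rcases m2 with h | h | h | h
      · exact Or.inr (hno y2 (h ▸ h2))
      · exact Or.inl h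
      · exact Or.inl (hno x2 (h ▸ h2.symm))
      · exact Or.inr h
    rcases hv1 with rfl | rfl <;> rcases hv2 with h | h
    · exact e1 h.symm
    · exact e2 h.symm
    · exact e3 h.symm
    · exact e4 h.symm
  · by_contra hno
    push_neg at hno
    have hv1 : x1 = u ∨ y1 = u := by
      rcases m1 with h | h | h | h
      · exact Or.inl h
      · exact Or.inr (hno y1 (h ▸ h1))
      · exact Or.inr h
      · exact Or.inl (hno x1 (h ▸ h1.symm))
    have hv2 : x2 = u ∨ y2 = u := by
      rcases m2 with h | h | h | h
      · exact Or.inl h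
      · exact Or.inr (hno y2 (h ▸ h2))
      · exact Or.inr h
      · exact Or.inl (hno x2 (h ▸ h2.symm))
    rcases hv1 with rfl | rfl <;> rcases hv2 with h | h
    · exact e1 h.symm
    · exact e2 h.symm
    · exact e3 h.symm
    · exact e4 h.symm

lemma mkDS (hT : T.IsTree) (hm : matchNum T = 2) {u v : V}
    (huv : T.Adj u v) (hcov : Cover T u v) : ∃ A B, DS T u v A B := by
  classical
  have hconn := hT.isConnected
  refine ⟨Finset.univ.filter (fun x => T.Adj u x ∧ x ≠ v),
    Finset.univ.filter (fun y => T.Adj v y ∧ y ≠ u), ?_⟩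
  have hAmem : ∀ x, x ∈ Finset.univ.filter (fun x => T.Adj u x ∧ x ≠ v) ↔
      T.Adj u x ∧ x ≠ v := by intro x; simp
  have hBmem : ∀ y, y ∈ Finset.univ.filter (fun y => T.Adj v y ∧ y ≠ u) ↔
      T.Adj v y ∧ y ≠ u := by intro y; simp
  have hnotri : ∀ x, T.Adj u x → T.Adj v x → False := fun x hux hvx =>
    tri hT huv hvx hux
  obtain ⟨hAne', hBne'⟩ := cover_nonempty hm hcov
  constructor
  · exact hconn
  · exact huv
  · intro x hx; exact ((hAmem x).1 hx).1
  · intro y hy; exact ((hBmem y).1 hy).1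
  · -- total
    intro x
    by_cases hxu : x = u
    · exact Or.inl hxu
    by_cases hxv : x = v
    · exact Or.inr (Or.inl hxv)
    obtain ⟨z, hz⟩ := exists_adj_of_ne hconn hxu
    rcases hcov x z hz with h | h | h | h
    · exact absurd h hxu
    · exact absurd h hxv
    · exact Or.inr (Or.inr (Or.inl ((hAmem x).2 ⟨h ▸ hz.symm, hxv⟩)))
    · exact Or.inr (Or.inr (Or.inr ((hBmem x).2 ⟨h ▸ hz.symm, hxu⟩)))
  · -- hAleaf
    intro x hx t ht
    obtain ⟨hux, hxv⟩ := (hAmem x).1 hx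
    rcases hcov x t ht with h | h | h | h
    · exact absurd h hux.ne'
    · exact absurd h hxv
    · exact h
    · exact absurd (hnotri x hux ((h ▸ ht) : T.Adj x v).symm) not_false
  · -- hBleaf
    intro y hy t ht
    obtain ⟨hvy, hyu⟩ := (hBmem y).1 hy
    rcases hcov y t ht with h | h | h | h
    · exact absurd h hyu
    · exact absurd h hvy.ne'
    · exact absurd (hnotri y ((h ▸ ht) : T.Adj y u).symm hvy) not_false
    · exact h
  · -- hAdisj
    intro x hx
    obtain ⟨hux, hxv⟩ := (hAmem x).1 hx
    exact ⟨hux.ne', hxv, fun hxB => hnotri x hux ((hBmem x).1 hxB).1⟩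
  · -- hBdisj
    intro y hy
    obtain ⟨hvy, hyu⟩ := (hBmem y).1 hy
    exact ⟨hyu, hvy.ne', fun hyA => hnotri y ((hAmem y).1 hyA).1 hvy⟩
  · obtain ⟨x, hx⟩ := hAne'
    exact ⟨x, (hAmem x).2 hx⟩
  · obtain ⟨y, hy⟩ := hBne'
    exact ⟨y, (hBmem y).2 hy⟩

lemma mkDS2 (hT : T.IsTree) (hm : matchNum T = 2) {u v w : V}
    (hne : u ≠ v) (hnadj : ¬T.Adj u v) (huw : T.Adj u w) (hwv : T.Adj w v)
    (hwu : w ≠ u) (hwv' : w ≠ v) (hcov : Cover T u v) :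
    (∃ u' v' A B, DS T u' v' A B) ∨ (∃ u' v' w' A B, DS2 T u' v' w' A B) := by
  classical
  have hconn := hT.isConnected
  set A := Finset.univ.filter (fun x => T.Adj u x ∧ x ≠ w) with hA
  set B := Finset.univ.filter (fun y => T.Adj v y ∧ y ≠ w) with hB
  have hAmem : ∀ x, x ∈ A ↔ T.Adj u x ∧ x ≠ w := by intro x; simp [hA]
  have hBmem : ∀ y, y ∈ B ↔ T.Adj v y ∧ y ≠ w := by intro y; simp [hB]
  have hnoC4 : ∀ x, T.Adj u x → T.Adj v x → x ≠ w → False := fun x hux hvx hxw =>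
    c4 hT hux hvx.symm hwv.symm huw.symm hne hxw
  by_cases hAne : A.Nonempty
  · by_cases hBne : B.Nonempty
    · refine Or.inr ⟨u, v, w, A, B, ?_⟩
      constructor
      · exact hconn
      · exact hne
      · exact hnadj
      · exact huw
      · exact hwv
      · intro x hx; exact ((hAmem x).1 hx).1
      · intro y hy; exact ((hBmem y).1 hy).1
      · -- total
        intro x
        by_cases hxu : x = u
        · exact Or.inl hxu
        by_cases hxv : x = v
        · exact Or.inr (Or.inl hxv)
        by_cases hxw : x = w
        · exact Or.inr (Or.inr (Or.inl hxw))
        obtain ⟨z, hz⟩ := exists_adj_of_ne hconn hxu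
        rcases hcov x z hz with h | h | h | h
        · exact absurd h hxu
        · exact absurd h hxv
        · exact Or.inr (Or.inr (Or.inr (Or.inl ((hAmem x).2 ⟨h ▸ hz.symm, hxw⟩))))
        · exact Or.inr (Or.inr (Or.inr (Or.inr ((hBmem x).2 ⟨h ▸ hz.symm, hxw⟩))))
      · -- hAleaf
        intro x hx t ht
        obtain ⟨hux, hxw⟩ := (hAmem x).1 hx
        have hxv : x ≠ v := fun he => hnadj (he ▸ hux)
        rcases hcov x t ht with h | h | h | h
        · exact absurd h hux.ne'
        · exact absurd h hxv
        · exact h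
        · exact absurd (hnoC4 x hux ((h ▸ ht) : T.Adj x v).symm hxw) not_false
      · -- hBleaf
        intro y hy t ht
        obtain ⟨hvy, hyw⟩ := (hBmem y).1 hy
        have hyu : y ≠ u := fun he => hnadj (he ▸ hvy).symm
        rcases hcov y t ht with h | h | h | h
        · exact absurd h hyu
        · exact absurd h hvy.ne'
        · exact absurd (hnoC4 y ((h ▸ ht) : T.Adj y u).symm hvy hyw) not_false
        · exact h
      · -- hwleaf
        intro t ht
        rcases hcov w t ht with h | h | h | h
        · exact absurd h hwu
        · exact absurd h hwv'
        · exact Or.inl h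
        · exact Or.inr h
      · -- hAdisj
        intro x hx
        obtain ⟨hux, hxw⟩ := (hAmem x).1 hx
        exact ⟨hux.ne', fun he => hnadj (he ▸ hux), hxw,
          fun hxB => hnoC4 x hux ((hBmem x).1 hxB).1 hxw⟩
      · -- hBdisj
        intro y hy
        obtain ⟨hvy, hyw⟩ := (hBmem y).1 hy
        exact ⟨fun he => hnadj (he ▸ hvy).symm, hvy.ne', hyw,
          fun hyA => hnoC4 y ((hAmem y).1 hyA).1 hvy hyw⟩
      · exact hAne
      · exact hBne
    · -- B empty : u's and w's side; cover {u, w}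
      have hBempty : ∀ y, T.Adj v y → y = w := by
        intro y hy
        by_contra hne'
        exact hBne ⟨y, (hBmem y).2 ⟨hy, hne'⟩⟩
      have hcov' : Cover T u w := by
        intro s t hst
        rcases hcov s t hst with h | h | h | h
        · exact Or.inl h
        · exact Or.inr (Or.inr (Or.inr (hBempty t (h ▸ hst))))
        · exact Or.inr (Or.inr (Or.inl h))
        · exact Or.inr (Or.inl (hBempty s (h ▸ hst.symm)))
      obtain ⟨A', B', hDS⟩ := mkDS hT hm huw hcov'
      exact Or.inl ⟨u, w, A', B', hDS⟩
  · -- A empty : cover {w, v}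
    have hAempty : ∀ x, T.Adj u x → x = w := by
      intro x hx
      by_contra hne'
      exact hAne ⟨x, (hAmem x).2 ⟨hx, hne'⟩⟩
    have hcov' : Cover T w v := by
      intro s t hst
      rcases hcov s t hst with h | h | h | h
      · exact Or.inr (Or.inr (Or.inl (hAempty t (h ▸ hst))))
      · exact Or.inr (Or.inl h)
      · exact Or.inl (hAempty s (h ▸ hst.symm))
      · exact Or.inr (Or.inr (Or.inr h))
    obtain ⟨A', B', hDS⟩ := mkDS hT hm hwv hcov'
    exact Or.inl ⟨w, v, A', B', hDS⟩

lemma struct (hT : T.IsTree) (hm : matchNum T = 2) :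
    (∃ u v A B, DS T u v A B) ∨ (∃ u v w A B, DS2 T u v w A B) := by
  rcases classify hT hm with ⟨c1, c2, hadj, hcov⟩ | ⟨c1, c2, m, hne, hnadj, h1, h2, hm1, hm2, hcov⟩
  · obtain ⟨A, B, hDS⟩ := mkDS hT hm hadj hcov
    exact Or.inl ⟨c1, c2, A, B, hDS⟩
  · exact mkDS2 hT hm hne hnadj h1 h2 hm1 hm2 hcov
end Build

section DoubleStar

lemma ds_adj {a b : ℕ} (x y : Fin (a + b + 2)) :
    (doubleStar a b).Adj x y ↔ x ≠ y ∧
      ((x.val = 0 ∧ y.val = 1) ∨ (x.val = 0 ∧ 2 ≤ y.val ∧ y.val < a + 2) ∨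
        (x.val = 1 ∧ a + 2 ≤ y.val) ∨ (y.val = 0 ∧ x.val = 1) ∨
        (y.val = 0 ∧ 2 ≤ x.val ∧ x.val < a + 2) ∨ (y.val = 1 ∧ a + 2 ≤ x.val)) := by
  rw [doubleStar, SimpleGraph.fromRel_adj]
  tauto

lemma iso_ree {n : ℕ} {T : SimpleGraph (Fin n)} (hT : T.IsTree) (hm : matchNum T = 2)
    {a b : ℕ} (e : T ≃g doubleStar a b) : ree T = (5 * (n : ℝ) - 4) / 6 := by
  have h02 : 0 < a + b + 2 := by omega
  have h12 : 1 < a + b + 2 := by omega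
  set z0 : Fin (a + b + 2) := ⟨0, h02⟩ with hz0
  set z1 : Fin (a + b + 2) := ⟨1, h12⟩ with hz1
  set u : Fin n := e.symm z0 with hu
  set v : Fin n := e.symm z1 with hv
  have heu : e u = z0 := e.apply_symm_apply z0
  have hev : e v = z1 := e.apply_symm_apply z1
  have hadj01 : (doubleStar a b).Adj z0 z1 := by
    rw [ds_adj]
    refine ⟨?_, Or.inl ⟨rfl, rfl⟩⟩
    intro h
    have := congrArg Fin.val h
    simp [hz0, hz1] at this
  have huv : T.Adj u v := by
    have := e.map_rel_iff (a := u) (b := v)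
    rw [heu, hev] at this
    exact this.1 hadj01
  have hcov : Cover T u v := by
    intro s t hst
    have hd : (doubleStar a b).Adj (e s) (e t) := e.map_rel_iff.2 hst
    rw [ds_adj] at hd
    have hval : (e s).val = 0 ∨ (e s).val = 1 ∨ (e t).val = 0 ∨ (e t).val = 1 := by
      rcases hd.2 with h | h | h | h | h | h <;> tauto
    have hback : ∀ x : Fin n, (e x).val = 0 → x = u := by
      intro x hx
      have : e x = z0 := Fin.ext (by simp [hz0, hx])
      rw [hu, ← this, e.symm_apply_apply]
    have hback1 : ∀ x : Fin n, (e x).val = 1 → x = v := by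
      intro x hx
      have : e x = z1 := Fin.ext (by simp [hz1, hx])
      rw [hv, ← this, e.symm_apply_apply]
    rcases hval with h | h | h | h
    · exact Or.inl (hback s h)
    · exact Or.inr (Or.inl (hback1 s h))
    · exact Or.inr (Or.inr (Or.inl (hback t h)))
    · exact Or.inr (Or.inr (Or.inr (hback1 t h)))
  obtain ⟨A, B, hDS⟩ := mkDS hT hm huv hcov
  have := hDS.ree_eq
  rwa [Fintype.card_fin] at this

end DoubleStar

section IsoConstr

lemma DS_toIso {n : ℕ} {T : SimpleGraph (Fin n)} {u v : Fin n} {A B : Finset (Fin n)}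
    (h : DS T u v A B) : Nonempty (T ≃g doubleStar A.card B.card) := by
  classical
  set a := A.card with ha
  set b := B.card with hb
  let f : Fin n → Fin (a + b + 2) := fun x =>
    if hx : x ∈ A then ⟨2 + (A.equivFin ⟨x, hx⟩).val, by
      have := (A.equivFin ⟨x, hx⟩).isLt; omega⟩
    else if hx' : x ∈ B then ⟨a + 2 + (B.equivFin ⟨x, hx'⟩).val, by
      have := (B.equivFin ⟨x, hx'⟩).isLt; omega⟩
    else if x = u then ⟨0, by omega⟩ else ⟨1, by omega⟩
  have hfu : (f u).val = 0 := by simp [f, h.uA, h.uB]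
  have hfv : (f v).val = 1 := by simp [f, h.vA, h.vB, Ne.symm h.une]
  have hfA : ∀ x (hx : x ∈ A), (f x).val = 2 + (A.equivFin ⟨x, hx⟩).val := by
    intro x hx; simp [f, hx]
  have hfB : ∀ x (hx : x ∈ B), (f x).val = a + 2 + (B.equivFin ⟨x, hx⟩).val := by
    intro x hx
    have hxA : x ∉ A := (h.hBdisj x hx).2.2
    simp [f, hx, hxA]
  have spec : ∀ x, ((f x).val = 0 ∧ x = u) ∨ ((f x).val = 1 ∧ x = v) ∨
      (∃ hx : x ∈ A, (f x).val = 2 + (A.equivFin ⟨x, hx⟩).val) ∨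
      (∃ hx : x ∈ B, (f x).val = a + 2 + (B.equivFin ⟨x, hx⟩).val) := by
    intro x
    rcases h.total x with rfl | rfl | hx | hx
    · exact Or.inl ⟨hfu, rfl⟩
    · exact Or.inr (Or.inl ⟨hfv, rfl⟩)
    · exact Or.inr (Or.inr (Or.inl ⟨hx, hfA x hx⟩))
    · exact Or.inr (Or.inr (Or.inr ⟨hx, hfB x hx⟩))
  have hinj : Function.Injective f := by
    intro x y hxy
    have hval : (f x).val = (f y).val := congrArg Fin.val hxy
    rcases spec x with ⟨e1, rfl⟩ | ⟨e1, rfl⟩ | ⟨hx, e1⟩ | ⟨hx, e1⟩ <;>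
      rcases spec y with ⟨e2, e2'⟩ | ⟨e2, e2'⟩ | ⟨hy, e2⟩ | ⟨hy, e2⟩
    · exact e2'.symm
    · exfalso; omega
    · exfalso; omega
    · exfalso; omega
    · exfalso; omega
    · exact e2'.symm
    · exfalso; omega
    · exfalso; omega
    · exfalso; omega
    · exfalso; omega
    · have hv2 : (A.equivFin ⟨x, hx⟩).val = (A.equivFin ⟨y, hy⟩).val := by omega
      exact congrArg Subtype.val (A.equivFin.injective (Fin.ext hv2))
    · have := (A.equivFin ⟨x, hx⟩).isLt; exfalso; omega
    · exfalso; omega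
    · exfalso; omega
    · have := (A.equivFin ⟨y, hy⟩).isLt; exfalso; omega
    · have hv2 : (B.equivFin ⟨x, hx⟩).val = (B.equivFin ⟨y, hy⟩).val := by omega
      exact congrArg Subtype.val (B.equivFin.injective (Fin.ext hv2))
  have hbij : Function.Bijective f :=
    (Fintype.bijective_iff_injective_and_card f).2 ⟨hinj, by
      rw [Fintype.card_fin, Fintype.card_fin]
      have := h.card_eq
      rw [Fintype.card_fin] at this
      omega⟩
  have hinv0 : ∀ x, (f x).val = 0 → x = u := by
    intro x hx0
    rcases spec x with ⟨e, rfl⟩ | ⟨e, e'⟩ | ⟨hx', e⟩ | ⟨hx', e⟩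
    · rfl
    · exfalso; omega
    · exfalso; omega
    · exfalso; omega
  have hinv1 : ∀ x, (f x).val = 1 → x = v := by
    intro x hx0
    rcases spec x with ⟨e, e'⟩ | ⟨e, rfl⟩ | ⟨hx', e⟩ | ⟨hx', e⟩
    · exfalso; omega
    · rfl
    · exfalso; omega
    · exfalso; omega
  have hinvA : ∀ x, 2 ≤ (f x).val → (f x).val < a + 2 → x ∈ A := by
    intro x h1 h2
    rcases spec x with ⟨e, e'⟩ | ⟨e, e'⟩ | ⟨hx', e⟩ | ⟨hx', e⟩
    · exfalso; omega
    · exfalso; omega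
    · exact hx'
    · exfalso; omega
  have hinvB : ∀ x, a + 2 ≤ (f x).val → x ∈ B := by
    intro x h1
    rcases spec x with ⟨e, e'⟩ | ⟨e, e'⟩ | ⟨hx', e⟩ | ⟨hx', e⟩
    · exfalso; omega
    · exfalso; omega
    · have := (A.equivFin ⟨x, hx'⟩).isLt; exfalso; omega
    · exact hx'
  have hiff : ∀ x y, (doubleStar a b).Adj (f x) (f y) ↔ T.Adj x y := by
    intro x y
    constructor
    · intro hadj
      rw [ds_adj] at hadj
      obtain ⟨hne, hcond⟩ := hadj
      rcases hcond with ⟨hc1, hc2⟩ | ⟨hc1, hc2, hc3⟩ | ⟨hc1, hc2⟩ | ⟨hc1, hc2⟩ |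
        ⟨hc1, hc2, hc3⟩ | ⟨hc1, hc2⟩
      · rw [hinv0 x hc1, hinv1 y hc2]; exact h.huv
      · rw [hinv0 x hc1]; exact h.hAadj y (hinvA y hc2 hc3)
      · rw [hinv1 x hc1]; exact h.hBadj y (hinvB y hc2)
      · rw [hinv0 y hc1, hinv1 x hc2]; exact h.huv.symm
      · rw [hinv0 y hc1]; exact (h.hAadj x (hinvA x hc2 hc3)).symm
      · rw [hinv1 y hc1]; exact (h.hBadj x (hinvB x hc2)).symm
    · intro hadj
      rw [ds_adj]
      rcases h.adj_cases hadj with ⟨rfl, rfl⟩ | ⟨rfl, rfl⟩ | ⟨rfl, ht⟩ | ⟨rfl, hs⟩ |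
        ⟨rfl, ht⟩ | ⟨rfl, hs⟩
      · refine ⟨fun heq => ?_, Or.inl ⟨hfu, hfv⟩⟩
        have := congrArg Fin.val heq; omega
      · refine ⟨fun heq => ?_, Or.inr (Or.inr (Or.inr (Or.inl ⟨hfu, hfv⟩)))⟩
        have := congrArg Fin.val heq; omega
      · have h1 := hfA y ht
        have h2 := (A.equivFin ⟨y, ht⟩).isLt
        refine ⟨fun heq => ?_, Or.inr (Or.inl ⟨hfu, by omega, by omega⟩)⟩
        have := congrArg Fin.val heq; omega
      · have h1 := hfA x hs
        have h2 := (A.equivFin ⟨x, hs⟩).isLt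
        refine ⟨fun heq => ?_, Or.inr (Or.inr (Or.inr (Or.inr (Or.inl
          ⟨hfu, by omega, by omega⟩))))⟩
        have := congrArg Fin.val heq; omega
      · have h1 := hfB y ht
        refine ⟨fun heq => ?_, Or.inr (Or.inr (Or.inl ⟨hfv, by omega⟩))⟩
        have := congrArg Fin.val heq; omega
      · have h1 := hfB x hs
        refine ⟨fun heq => ?_, Or.inr (Or.inr (Or.inr (Or.inr (Or.inr
          ⟨hfv, by omega⟩))))⟩
        have := congrArg Fin.val heq; omega
  exact ⟨⟨Equiv.ofBijective f hbij, fun {x y} => hiff x y⟩⟩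

end IsoConstr

/-- for a tree T on n vertices with matching number 2,
ξ^{ee}(T) ≤ (5n-4)/6 with equality iff T is a double star P_2(a,b). -/
theorem stmt9 (n : ℕ) (T : SimpleGraph (Fin n)) (hT : T.IsTree)
    (hm : matchNum T = 2) :
    ree T ≤ (5 * (n : ℝ) - 4) / 6 ∧
    (ree T = (5 * (n : ℝ) - 4) / 6 ↔ ∃ a b : ℕ, 1 ≤ a ∧ 1 ≤ b ∧ a + b = n - 2 ∧
      Nonempty (T ≃g doubleStar a b)) := by
  rcases struct hT hm with ⟨u, v, A, B, hDS⟩ | ⟨u, v, w, A, B, hDS2⟩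
  · have hree := hDS.ree_eq
    rw [Fintype.card_fin] at hree
    have hcard := hDS.card_eq
    rw [Fintype.card_fin] at hcard
    refine ⟨le_of_eq hree, ⟨fun _ => ?_, fun _ => hree⟩⟩
    exact ⟨A.card, B.card, hDS.hAne.card_pos, hDS.hBne.card_pos, by omega, DS_toIso hDS⟩
  · have hree := hDS2.ree_eq
    rw [Fintype.card_fin] at hree
    have hcard := hDS2.card_eq
    rw [Fintype.card_fin] at hcard
    have hA1 : 1 ≤ A.card := hDS2.hAne.card_pos
    have hB1 : 1 ≤ B.card := hDS2.hBne.card_pos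
    have hn5 : 5 ≤ n := by omega
    have hn5' : (5 : ℝ) ≤ (n : ℝ) := by exact_mod_cast hn5
    refine ⟨?_, ⟨fun heq => ?_, fun hex => ?_⟩⟩
    · rw [hree]; linarith
    · rw [hree] at heq; exfalso; linarith
    · obtain ⟨a, b, ha, hb, hab, ⟨e⟩⟩ := hex
      exact iso_ree hT hm e
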